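/- arXiv:math/0512574 — 2 statements merged into one kernel-verified Lean document; each statement's English description precedes it below -/
import Mathlib

section
/- Let L be a color Lie algebra, ω a scalar graded 2-cocycle, and L_ω = L ⋉ K·x the corresponding central extension. Then the generalized enveloping algebra U_ω(L) is isomorphic as a G-graded, Z-filtered algebra to the quotient U(L_ω)/⟨y−1⟩, where y is the image of the central element x in the universal enveloping algebra U(L_ω) and ⟨y−1⟩ is the two-sided ideal it generates. -/
open TensorAlgebra

/-- An antisymmetric bicharacter `ε : G × G → K` on an abelian group `G`. -/
structure ColorStructure (G K : Type*) [CommGroup G] [Field K] where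
  ε : G → G → K
  antisym : ∀ g h, ε g h * ε h g = 1
  mul_right : ∀ g h k, ε g (h * k) = ε g h * ε g k
  mul_left : ∀ g h k, ε (g * h) k = ε g k * ε h k

/-- A `G`-graded `ε`-Lie algebra (color Lie algebra) structure on a `K`-vector space `V`. -/
structure ColorLieAlgebra {G K : Type*} [CommGroup G] [DecidableEq G] [Field K]
    (χ : ColorStructure G K) (V : Type*) [AddCommGroup V] [Module K V] where
  grading : G → Submodule K V
  decomp : DirectSum.IsInternal grading
  bracket : V →ₗ[K] V →ₗ[K] V
  bracket_grade : ∀ g h : G, ∀ a ∈ grading g, ∀ b ∈ grading h,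
    bracket a b ∈ grading (g * h)
  bracket_antisym : ∀ g h : G, ∀ a ∈ grading g, ∀ b ∈ grading h,
    bracket a b = -(χ.ε g h • bracket b a)
  jacobi : ∀ g h k : G, ∀ a ∈ grading g, ∀ b ∈ grading h, ∀ c ∈ grading k,
    χ.ε k g • bracket a (bracket b c) + χ.ε g h • bracket b (bracket c a)
      + χ.ε h k • bracket c (bracket a b) = 0

/-- A scalar graded 2-cocycle of degree zero on a color Lie algebra,
with values in `K` regarded as a trivial graded `L`-module. -/
structure ColorCocycle {G K : Type*} [CommGroup G] [DecidableEq G] [Field K]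
    {χ : ColorStructure G K} {V : Type*} [AddCommGroup V] [Module K V]
    (L : ColorLieAlgebra χ V) where
  ω : V →ₗ[K] V →ₗ[K] K
  antisym : ∀ g h : G, ∀ a ∈ L.grading g, ∀ b ∈ L.grading h,
    ω a b = -(χ.ε g h * ω b a)
  cocycle : ∀ g h k : G, ∀ a ∈ L.grading g, ∀ b ∈ L.grading h, ∀ c ∈ L.grading k,
    χ.ε k g * ω a (L.bracket b c) + χ.ε g h * ω b (L.bracket c a)
      + χ.ε h k * ω c (L.bracket a b) = 0
  degree_zero : ∀ g h : G, g * h ≠ 1 → ∀ a ∈ L.grading g, ∀ b ∈ L.grading h, ω a b = 0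

variable {G K V : Type*} [CommGroup G] [DecidableEq G] [Field K] [AddCommGroup V] [Module K V]
  {χ : ColorStructure G K}

/-- The defining relations of the generalized enveloping algebra `U_ω(L)`. -/
inductive URel (L : ColorLieAlgebra χ V) (c : ColorCocycle L) :
    TensorAlgebra K V → TensorAlgebra K V → Prop
  | rel {g h : G} {a b : V} (ha : a ∈ L.grading g) (hb : b ∈ L.grading h) :
      URel L c (ι K a * ι K b)
        (χ.ε g h • (ι K b * ι K a) + ι K (L.bracket a b)
          + algebraMap K (TensorAlgebra K V) (c.ω a b))

/-- The generalized enveloping algebra `U_ω(L)`: the quotient of the tensor algebra `T(L)`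
by the two-sided ideal generated by the elements
`v₁ ⊗ v₂ - ε(|v₁|,|v₂|) v₂ ⊗ v₁ - [v₁,v₂] - ω(v₁,v₂)` for homogeneous `v₁, v₂`. -/
def Uenv (L : ColorLieAlgebra χ V) (c : ColorCocycle L) : Type _ :=
  RingQuot (URel L c)

noncomputable instance (L : ColorLieAlgebra χ V) (c : ColorCocycle L) : Ring (Uenv L c) :=
  inferInstanceAs (Ring (RingQuot (URel L c)))

noncomputable instance (L : ColorLieAlgebra χ V) (c : ColorCocycle L) :
    Algebra K (Uenv L c) :=
  inferInstanceAs (Algebra K (RingQuot (URel L c)))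

/-- The canonical map `i_ω : L → U_ω(L)`. -/
noncomputable def Uι (L : ColorLieAlgebra χ V) (c : ColorCocycle L) : V →ₗ[K] Uenv L c :=
  (RingQuot.mkAlgHom K (URel L c)).toLinearMap ∘ₗ ι K

/-- The canonical positive filtration on `U_ω(L)`: `Ufil L c n` is the span of products of
at most `n` images of elements of `L` (the image of `T_n(L)`). -/
noncomputable def Ufil (L : ColorLieAlgebra χ V) (c : ColorCocycle L) (n : ℕ) :
    Submodule K (Uenv L c) :=
  Submodule.span K {u | ∃ l : List V, l.length ≤ n ∧ u = (l.map (Uι L c)).prod}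

/-- `Ulow L c n` is `Ufil L c (n-1)`, with the convention `Ufil L c (-1) = ⊥`. -/
noncomputable def Ulow (L : ColorLieAlgebra χ V) (c : ColorCocycle L) :
    ℕ → Submodule K (Uenv L c)
  | 0 => ⊥
  | n + 1 => Ufil L c n

/-- The `G`-grading of `U_ω(L)`: the `g`-component is spanned by products of images of
homogeneous elements whose degrees multiply to `g`. -/
noncomputable def Ugrading (L : ColorLieAlgebra χ V) (c : ColorCocycle L) (g : G) :
    Submodule K (Uenv L c) :=
  Submodule.span K {u | ∃ l : List (G × V), (∀ p ∈ l, p.2 ∈ L.grading p.1) ∧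
    (l.map Prod.fst).prod = g ∧ u = (l.map fun p => Uι L c p.2).prod}

/-- The zero cocycle on a color Lie algebra. -/
noncomputable def zeroCocycle (L : ColorLieAlgebra χ V) : ColorCocycle L where
  ω := 0
  antisym := by intros; simp
  cocycle := by intros; simp
  degree_zero := by intros; simp


section Auxiliary
set_option linter.unusedSectionVars false

lemma eps_ne_zero (χ : ColorStructure G K) (g h : G) : χ.ε g h ≠ 0 := by
  intro h0
  have := χ.antisym g h
  rw [h0, zero_mul] at this
  exact zero_ne_one this

lemma eps_one_left (χ : ColorStructure G K) (h : G) : χ.ε 1 h = 1 := by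
  have h1 : χ.ε 1 h * χ.ε 1 h = χ.ε 1 h * 1 := by
    have := χ.mul_left 1 1 h
    rw [one_mul] at this
    rw [mul_one, ← this]
  exact mul_left_cancel₀ (eps_ne_zero χ 1 h) h1

lemma eps_one_right (χ : ColorStructure G K) (g : G) : χ.ε g 1 = 1 := by
  have h1 : χ.ε g 1 * χ.ε g 1 = χ.ε g 1 * 1 := by
    have := χ.mul_right g 1 1
    rw [one_mul] at this
    rw [mul_one, ← this]
  exact mul_left_cancel₀ (eps_ne_zero χ g 1) h1

lemma Uι_apply (L : ColorLieAlgebra χ V) (c : ColorCocycle L) (v : V) :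
    Uι L c v = RingQuot.mkAlgHom K (URel L c) (ι K v) := rfl

lemma Uι_rel (L : ColorLieAlgebra χ V) (c : ColorCocycle L) {g h : G} {a b : V}
    (ha : a ∈ L.grading g) (hb : b ∈ L.grading h) :
    Uι L c a * Uι L c b = χ.ε g h • (Uι L c b * Uι L c a) + Uι L c (L.bracket a b)
      + algebraMap K (Uenv L c) (c.ω a b) := by
  have := RingQuot.mkAlgHom_rel K (s := URel L c) (URel.rel (c := c) ha hb)
  simp [Uι_apply, map_add, map_mul, map_smul, AlgHom.commutes] at this ⊢
  exact this

lemma one_mem_Ufil (L : ColorLieAlgebra χ V) (c : ColorCocycle L) (n : ℕ) :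
    (1 : Uenv L c) ∈ Ufil L c n :=
  Submodule.subset_span ⟨[], by simp⟩

lemma Ufil_mono (L : ColorLieAlgebra χ V) (c : ColorCocycle L) {m n : ℕ} (h : m ≤ n) :
    Ufil L c m ≤ Ufil L c n :=
  Submodule.span_mono fun u ⟨l, hl, hu⟩ => ⟨l, hl.trans h, hu⟩

lemma Uι_mul_Ufil (L : ColorLieAlgebra χ V) (c : ColorCocycle L) (v : V) {n : ℕ}
    {P : Uenv L c} (hP : P ∈ Ufil L c n) : Uι L c v * P ∈ Ufil L c (n + 1) := by
  induction hP using Submodule.span_induction with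
  | mem u hu =>
    obtain ⟨l, hl, rfl⟩ := hu
    exact Submodule.subset_span ⟨v :: l, by simpa using Nat.succ_le_succ hl, by simp⟩
  | zero => simp
  | add x y hx hy ihx ihy => rw [mul_add]; exact add_mem ihx ihy
  | smul a x hx ihx => rw [mul_smul_comm]; exact Submodule.smul_mem _ _ ihx

lemma prod_mem_Ufil (L : ColorLieAlgebra χ V) (c : ColorCocycle L) (l : List (V × K)) :
    (l.map fun p => Uι L c p.1 + algebraMap K (Uenv L c) p.2).prod ∈ Ufil L c l.length := by
  induction l with
  | nil => exact one_mem_Ufil L c 0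
  | cons p t ih =>
    simp only [List.map_cons, List.prod_cons, List.length_cons]
    rw [add_mul]
    refine add_mem (Uι_mul_Ufil L c p.1 ih) ?_
    rw [← Algebra.smul_def]
    exact Ufil_mono L c (Nat.le_succ _) (Submodule.smul_mem _ _ ih)

lemma one_mem_Ugrading (L : ColorLieAlgebra χ V) (c : ColorCocycle L) :
    (1 : Uenv L c) ∈ Ugrading L c 1 :=
  Submodule.subset_span ⟨[], by simp, by simp, by simp⟩

lemma Uι_mul_Ugrading (L : ColorLieAlgebra χ V) (c : ColorCocycle L) {g h : G} {v : V}
    (hv : v ∈ L.grading g) {P : Uenv L c} (hP : P ∈ Ugrading L c h) :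
    Uι L c v * P ∈ Ugrading L c (g * h) := by
  induction hP using Submodule.span_induction with
  | mem u hu =>
    obtain ⟨l, hl, hprod, rfl⟩ := hu
    refine Submodule.subset_span ⟨(g, v) :: l, ?_, by simp [hprod], by simp⟩
    intro p hp
    rcases List.mem_cons.1 hp with rfl | hp
    · exact hv
    · exact hl p hp
  | zero => simp
  | add x y hx hy ihx ihy => rw [mul_add]; exact add_mem ihx ihy
  | smul a x hx ihx => rw [mul_smul_comm]; exact Submodule.smul_mem _ _ ihx

lemma prod_mem_Ugrading (L : ColorLieAlgebra χ V) (c : ColorCocycle L)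
    (l : List (G × (V × K)))
    (hl : ∀ p ∈ l, p.2.1 ∈ L.grading p.1 ∧ (p.1 ≠ 1 → p.2.2 = 0)) :
    (l.map fun p => Uι L c p.2.1 + algebraMap K (Uenv L c) p.2.2).prod
      ∈ Ugrading L c ((l.map Prod.fst).prod) := by
  induction l with
  | nil => simpa using one_mem_Ugrading L c
  | cons p t ih =>
    have hp := hl p List.mem_cons_self
    have ht := ih fun q hq => hl q (List.mem_cons_of_mem p hq)
    simp only [List.map_cons, List.prod_cons]
    rw [add_mul]
    refine add_mem (Uι_mul_Ugrading L c hp.1 ht) ?_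
    by_cases h1 : p.1 = 1
    · rw [← Algebra.smul_def, h1, one_mul]
      exact Submodule.smul_mem _ _ ht
    · rw [hp.2 h1]
      simp

lemma key_comm {R : Type*} [Ring R] [Algebra K R] (A B D : R) (α β : K)
    (h : A * B = B * A + D) :
    (A + algebraMap K R α) * (B + algebraMap K R β)
      = (B + algebraMap K R β) * (A + algebraMap K R α) + D := by
  simp only [mul_add, add_mul, h]
  rw [← Algebra.commutes β A, ← Algebra.commutes α B, ← Algebra.commutes α (algebraMap K R β)]
  abel

end Auxiliary

set_option maxHeartbeats 1600000 in
/-- `U_ω(L)` is isomorphic, as a `G`-graded `ℤ`-filtered algebra, to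
`U(L_ω)/⟨y - 1⟩`, where `L_ω = L ⋉ K·x` is the central extension of `L` by `ω`,
`U(L_ω)` its (ordinary) universal enveloping algebra, and `y` the image of the central
element `x` in `U(L_ω)`. -/
theorem Uomega_iso_quotient_of_central_extension [CharZero K]
    (L : ColorLieAlgebra χ V) (c : ColorCocycle L)
    (E : ColorLieAlgebra χ (V × K))
    (hEg : ∀ g : G, E.grading g =
      (L.grading g).prod (if g = 1 then (⊤ : Submodule K K) else ⊥))
    (hEb : ∀ p q : V × K, E.bracket p q = (L.bracket p.1 q.1, c.ω p.1 q.1)) :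
    -- `y` is the image of the central element `x = (0,1)` in `U(L_ω)`
    ∀ y : Uenv E (zeroCocycle E), y = Uι E (zeroCocycle E) ((0 : V), (1 : K)) →
    -- the quotient `U(L_ω)/⟨y-1⟩` as a `RingQuot`
    ∃ Φ : RingQuot (fun a b : Uenv E (zeroCocycle E) => a = y - 1 ∧ b = 0) ≃ₐ[K]
        Uenv L c,
      -- compatibility with the canonical maps from `L`
      (∀ (x : V) (a : K),
        Φ (RingQuot.mkAlgHom K _ (Uι E (zeroCocycle E) (x, a)))
          = Uι L c x + algebraMap K (Uenv L c) a) ∧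
      -- `Φ` respects the filtrations (images of the `U_n`)
      (∀ n : ℕ,
        Submodule.map Φ.toLinearMap
          (Submodule.map (RingQuot.mkAlgHom K
              (fun a b : Uenv E (zeroCocycle E) => a = y - 1 ∧ b = 0)).toLinearMap
            (Ufil E (zeroCocycle E) n)) = Ufil L c n) ∧
      -- `Φ` respects the `G`-gradings
      (∀ g : G,
        Submodule.map Φ.toLinearMap
          (Submodule.map (RingQuot.mkAlgHom K
              (fun a b : Uenv E (zeroCocycle E) => a = y - 1 ∧ b = 0)).toLinearMap
            (Ugrading E (zeroCocycle E) g)) = Ugrading L c g) := by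
  intro y hy
  -- the forward map on the tensor algebra
  set φ : V × K →ₗ[K] Uenv L c :=
    Uι L c ∘ₗ LinearMap.fst K V K + Algebra.linearMap K (Uenv L c) ∘ₗ LinearMap.snd K V K
    with hφdef
  have hf₀ : ∀ p : V × K,
      (TensorAlgebra.lift K φ) (ι K p) = Uι L c p.1 + algebraMap K (Uenv L c) p.2 := by
    intro p; rw [TensorAlgebra.lift_ι_apply]; rfl
  set f₀ : TensorAlgebra K (V × K) →ₐ[K] Uenv L c := TensorAlgebra.lift K φ with hf₀def
  have hrelE : ∀ ⦃u v' : TensorAlgebra K (V × K)⦄, URel E (zeroCocycle E) u v' → f₀ u = f₀ v' := by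
    intro u v' r
    obtain @⟨g, h, a, b, ha, hb⟩ := r
    rw [hEg] at ha hb
    rw [Submodule.mem_prod] at ha hb
    have hzw : (((zeroCocycle E).ω a) b) = 0 := rfl
    rw [hzw, map_zero, add_zero, map_add, map_smul, map_mul, map_mul, hf₀, hf₀, hEb, hf₀]
    have hrel := Uι_rel L c ha.1 hb.1
    by_cases hg : g = 1
    · have hε : χ.ε g h = 1 := by rw [hg]; exact eps_one_left χ h
      rw [hε, one_smul]
      rw [hε, one_smul] at hrel
      exact key_comm _ _ _ _ _ (by rw [hrel, add_assoc])
    · by_cases hh : h = 1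
      · have hε : χ.ε g h = 1 := by rw [hh]; exact eps_one_right χ g
        rw [hε, one_smul]
        rw [hε, one_smul] at hrel
        exact key_comm _ _ _ _ _ (by rw [hrel, add_assoc])
      · have hα : a.2 = 0 := by
          have := ha.2; rw [if_neg hg] at this; simpa using this
        have hβ : b.2 = 0 := by
          have := hb.2; rw [if_neg hh] at this; simpa using this
        rw [hα, hβ, map_zero, add_zero, add_zero, hrel, add_assoc]
  set f₁ : Uenv E (zeroCocycle E) →ₐ[K] Uenv L c := RingQuot.liftAlgHom K ⟨f₀, hrelE⟩ with hf₁def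
  have hf₁ : ∀ p : V × K, f₁ (Uι E (zeroCocycle E) p) = Uι L c p.1 + algebraMap K (Uenv L c) p.2 := by
    intro p
    exact (RingQuot.liftAlgHom_mkAlgHom_apply K f₀ hrelE ((ι K) p)).trans (hf₀ p)
  have hf₁y : f₁ y = 1 := by rw [hy, hf₁]; simp
  set relQ : Uenv E (zeroCocycle E) → Uenv E (zeroCocycle E) → Prop := fun a b => a = y - 1 ∧ b = 0 with hrelQdef
  have hrelQf : ∀ ⦃u v' : Uenv E (zeroCocycle E)⦄, relQ u v' → f₁ u = f₁ v' := by
    rintro u v' ⟨rfl, rfl⟩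
    rw [map_sub, hf₁y, map_one, map_zero, sub_self]
  set Φ' : RingQuot relQ →ₐ[K] Uenv L c := RingQuot.liftAlgHom K ⟨f₁, hrelQf⟩ with hΦ'def
  set mkQ := RingQuot.mkAlgHom K relQ with hmkQdef
  have hΦ'mk : ∀ u : Uenv E (zeroCocycle E), Φ' (mkQ u) = f₁ u := by
    intro u
    exact RingQuot.liftAlgHom_mkAlgHom_apply K f₁ hrelQf u
  have hmkQy : mkQ y = 1 := by
    have h0 : mkQ (y - 1) = mkQ 0 := RingQuot.mkAlgHom_rel K ⟨rfl, rfl⟩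
    rw [map_sub, map_one, map_zero, sub_eq_zero] at h0
    exact h0
  -- the backward map
  set ψ : V →ₗ[K] RingQuot relQ :=
    mkQ.toLinearMap ∘ₗ (Uι E (zeroCocycle E) ∘ₗ LinearMap.inl K V K) with hψdef
  have hg₀ : ∀ v : V, (TensorAlgebra.lift K ψ) (ι K v) = mkQ (Uι E (zeroCocycle E) (v, 0)) := by
    intro v; rw [TensorAlgebra.lift_ι_apply]; rfl
  set g₀ : TensorAlgebra K V →ₐ[K] RingQuot relQ := TensorAlgebra.lift K ψ with hg₀def
  have hmem0 : ∀ {g : G} {v : V}, v ∈ L.grading g → ((v, 0) : V × K) ∈ E.grading g := by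
    intro g v hv; rw [hEg]; exact Submodule.mem_prod.2 ⟨hv, Submodule.zero_mem _⟩
  have hrelL : ∀ ⦃u v' : TensorAlgebra K V⦄, URel L c u v' → g₀ u = g₀ v' := by
    intro u v' r
    obtain @⟨g, h, a, b, ha, hb⟩ := r
    rw [map_add, map_add, map_smul, map_mul, map_mul, hg₀, hg₀, hg₀, AlgHom.commutes]
    have hE := Uι_rel E (zeroCocycle E) (hmem0 ha) (hmem0 hb)
    have hzw : (((zeroCocycle E).ω ((a, 0) : V × K)) ((b, 0) : V × K)) = 0 := rfl
    rw [hzw, map_zero, add_zero] at hE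
    have hbr : E.bracket ((a, 0) : V × K) ((b, 0) : V × K)
        = ((L.bracket a b, 0) : V × K) + (c.ω a b) • (((0 : V), (1 : K)) : V × K) := by
      rw [hEb]; simp [Prod.ext_iff]
    rw [hbr, map_add, map_smul] at hE
    have := congrArg mkQ hE
    rw [map_mul, map_add, map_smul, map_mul, map_add, map_smul, ← hy, hmkQy] at this
    rw [this, Algebra.algebraMap_eq_smul_one, add_assoc]
  set Ψ : Uenv L c →ₐ[K] RingQuot relQ := RingQuot.liftAlgHom K ⟨g₀, hrelL⟩ with hΨdef
  have hΨ : ∀ v : V, Ψ (Uι L c v) = mkQ (Uι E (zeroCocycle E) (v, 0)) := by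
    intro v
    exact (RingQuot.liftAlgHom_mkAlgHom_apply K g₀ hrelL ((ι K) v)).trans (hg₀ v)
  have hy' : y = Uι E (zeroCocycle E) ((0 : V), (1 : K)) := hy
  -- the two maps are inverse
  have hΦΨ : Φ'.comp Ψ = AlgHom.id K (Uenv L c) := by
    refine RingQuot.ringQuot_ext' K _ _ (TensorAlgebra.hom_ext (LinearMap.ext fun v => ?_))
    show Φ' (Ψ (Uι L c v)) = Uι L c v
    refine (congrArg Φ' (hΨ v)).trans ((hΦ'mk _).trans ((hf₁ (v, 0)).trans ?_))
    simp
  have hΨΦ : Ψ.comp Φ' = AlgHom.id K (RingQuot relQ) := by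
    refine RingQuot.ringQuot_ext' K _ _ ?_
    refine RingQuot.ringQuot_ext' K _ _ (TensorAlgebra.hom_ext (LinearMap.ext fun p => ?_))
    show Ψ (Φ' (mkQ (Uι E (zeroCocycle E) p))) = mkQ (Uι E (zeroCocycle E) p)
    have hp : (p : V × K) = ((p.1, 0) : V × K) + p.2 • (((0 : V), (1 : K)) : V × K) := by
      simp [Prod.ext_iff]
    have e3 : mkQ (Uι E (zeroCocycle E) p)
        = mkQ (Uι E (zeroCocycle E) (p.1, 0)) + algebraMap K (RingQuot relQ) p.2 := by
      conv_lhs => rw [hp]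
      rw [map_add, map_smul, map_add, map_smul, ← hy', hmkQy, Algebra.algebraMap_eq_smul_one]
    refine ((congrArg Ψ ((hΦ'mk _).trans (hf₁ p))).trans ?_).trans e3.symm
    rw [map_add, hΨ, AlgHom.commutes]
  -- transfer of submodules along the isomorphism
  have hstep : ∀ S : Submodule K (Uenv E (zeroCocycle E)),
      Submodule.map (AlgEquiv.ofAlgHom Φ' Ψ hΦΨ hΨΦ).toLinearMap
        (Submodule.map mkQ.toLinearMap S) = Submodule.map f₁.toLinearMap S := by
    intro S
    rw [AlgEquiv.toLinearMap_ofAlgHom, ← Submodule.map_comp]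
    congr 1
    exact LinearMap.ext fun u => hΦ'mk u
  -- the filtration is preserved
  have hfil : ∀ n : ℕ,
      Submodule.map f₁.toLinearMap (Ufil E (zeroCocycle E) n) = Ufil L c n := by
    intro n
    rw [Ufil, Ufil, Submodule.map_span]
    apply le_antisymm
    · rw [Submodule.span_le]
      rintro _ ⟨u, ⟨l, hl, rfl⟩, rfl⟩
      have heq : f₁.toLinearMap ((l.map (Uι E (zeroCocycle E))).prod)
          = (l.map fun p => Uι L c p.1 + algebraMap K (Uenv L c) p.2).prod := by
        show f₁ _ = _
        rw [map_list_prod, List.map_map]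
        exact congrArg List.prod (List.map_congr_left fun p _ => hf₁ p)
      rw [heq]
      exact Ufil_mono L c hl (prod_mem_Ufil L c l)
    · rw [Submodule.span_le]
      rintro _ ⟨l, hl, rfl⟩
      refine Submodule.subset_span
        ⟨((l.map fun v => ((v, 0) : V × K)).map (Uι E (zeroCocycle E))).prod,
          ⟨l.map fun v => ((v, 0) : V × K), by simpa using hl, rfl⟩, ?_⟩
      show f₁ _ = _
      rw [map_list_prod, List.map_map, List.map_map]
      refine congrArg List.prod (List.map_congr_left fun v _ => ?_)
      show f₁ (Uι E (zeroCocycle E) (v, 0)) = Uι L c v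
      rw [hf₁]
      simp
  -- the grading is preserved
  have hgrmem : ∀ (q : G × (V × K)), q.2 ∈ E.grading q.1 →
      q.2.1 ∈ L.grading q.1 ∧ (q.1 ≠ 1 → q.2.2 = 0) := by
    rintro ⟨g, p⟩ hq
    rw [hEg, Submodule.mem_prod] at hq
    refine ⟨hq.1, fun hg => ?_⟩
    have := hq.2
    rw [if_neg hg] at this
    simpa using this
  have hgr : ∀ g : G,
      Submodule.map f₁.toLinearMap (Ugrading E (zeroCocycle E) g) = Ugrading L c g := by
    intro g
    rw [Ugrading, Ugrading, Submodule.map_span]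
    apply le_antisymm
    · rw [Submodule.span_le]
      rintro _ ⟨u, ⟨l, hl, hprod, rfl⟩, rfl⟩
      have heq : f₁.toLinearMap ((l.map fun p => Uι E (zeroCocycle E) p.2).prod)
          = (l.map fun p => Uι L c p.2.1 + algebraMap K (Uenv L c) p.2.2).prod := by
        show f₁ _ = _
        rw [map_list_prod, List.map_map]
        exact congrArg List.prod (List.map_congr_left fun p _ => hf₁ p.2)
      rw [heq, ← hprod]
      exact prod_mem_Ugrading L c l fun p hp => hgrmem p (hl p hp)
    · rw [Submodule.span_le]
      rintro _ ⟨l, hl, hprod, rfl⟩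
      refine Submodule.subset_span
        ⟨((l.map fun p => ((p.1, (p.2, 0)) : G × (V × K))).map
            fun p => Uι E (zeroCocycle E) p.2).prod,
          ⟨l.map fun p => ((p.1, (p.2, 0)) : G × (V × K)), ?_, ?_, rfl⟩, ?_⟩
      · intro q hq
        rw [List.mem_map] at hq
        obtain ⟨p, hp, rfl⟩ := hq
        rw [hEg]
        exact Submodule.mem_prod.2 ⟨hl p hp, Submodule.zero_mem _⟩
      · rw [List.map_map]
        simpa [Function.comp_def] using hprod
      · show f₁ _ = _
        rw [map_list_prod, List.map_map, List.map_map]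
        refine congrArg List.prod (List.map_congr_left fun p _ => ?_)
        show f₁ (Uι E (zeroCocycle E) (p.2, 0)) = Uι L c p.2
        rw [hf₁]
        simp
  refine ⟨AlgEquiv.ofAlgHom Φ' Ψ hΦΨ hΨΦ, ?_, ?_, ?_⟩
  · intro x a
    show Φ' (mkQ (Uι E (zeroCocycle E) (x, a))) = _
    rw [hΦ'mk, hf₁]
  · intro n
    rw [hstep]
    exact hfil n
  · intro g
    rw [hstep]
    exact hgr g
end

section
/- The associated graded algebra of U_ω(L) (with respect to the canonical filtration) is ε-commutative: for all homogeneous elements a,b of the associated graded algebra, ab = ε(|a|,|b|)ba. -/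
open TensorAlgebra

variable {G K V : Type*} [CommGroup G] [DecidableEq G] [Field K] [AddCommGroup V] [Module K V]
  {χ : ColorStructure G K}

namespace AGECAux

variable {G K V : Type*} [CommGroup G] [DecidableEq G] [Field K] [AddCommGroup V] [Module K V]
  {χ : ColorStructure G K}

lemma eps_ne_zero (χ : ColorStructure G K) (g h : G) : χ.ε g h ≠ 0 := by
  intro h0
  have := χ.antisym g h
  rw [h0, zero_mul] at this
  exact zero_ne_one this

lemma eps_one_left (χ : ColorStructure G K) (h : G) : χ.ε 1 h = 1 := by
  have h1 := χ.mul_left 1 1 h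
  rw [one_mul] at h1
  exact (mul_left_cancel₀ (eps_ne_zero χ 1 h) (by rw [← h1, mul_one])).symm

lemma eps_one_right (χ : ColorStructure G K) (g : G) : χ.ε g 1 = 1 := by
  have h1 := χ.mul_right g 1 1
  rw [one_mul] at h1
  exact (mul_left_cancel₀ (eps_ne_zero χ g 1) (by rw [← h1, mul_one])).symm

variable (L : ColorLieAlgebra χ V) (c : ColorCocycle L)

lemma Uι_apply (v : V) : Uι L c v = RingQuot.mkAlgHom K (URel L c) (ι K v) := rfl

lemma Uι_mul_Uι {g h : G} {a b : V} (ha : a ∈ L.grading g) (hb : b ∈ L.grading h) :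
    Uι L c a * Uι L c b = χ.ε g h • (Uι L c b * Uι L c a) + Uι L c (L.bracket a b)
      + algebraMap K (Uenv L c) (c.ω a b) := by
  have h1 := RingQuot.mkAlgHom_rel K (URel.rel ha hb : URel L c _ _)
  simp only [Uι_apply, map_mul, map_add, map_smul, AlgHom.commutes] at h1 ⊢
  exact h1

/-- The decomposition of `V` according to the grading. -/
noncomputable def Vdecomp : V ≃ₗ[K] DirectSum G fun g => L.grading g :=
  (LinearEquiv.ofBijective (DirectSum.coeLinearMap L.grading) L.decomp).symm

lemma Vdecomp_homog {g : G} {a : V} (ha : a ∈ L.grading g) :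
    Vdecomp L a = DirectSum.lof K G (fun g => L.grading g) g ⟨a, ha⟩ := by
  rw [Vdecomp, LinearEquiv.symm_apply_eq]
  simp [DirectSum.lof_eq_of, DirectSum.coeLinearMap_of]
  exact (DirectSum.coeLinearMap_of L.grading g ⟨a, ha⟩).symm

/-- `single g` as a `K`-linear map. -/
noncomputable def msingle (g : G) : Uenv L c →ₗ[K] MonoidAlgebra (Uenv L c) G where
  toFun := MonoidAlgebra.single g
  map_add' := fun x y => MonoidAlgebra.single_add g x y
  map_smul' := fun k x => (MonoidAlgebra.smul_single k g x).symm

lemma msingle_apply (g : G) (u : Uenv L c) : msingle L c g u = MonoidAlgebra.single g u := rfl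

/-- The linear map `V → MonoidAlgebra (Uenv L c) G` sending a homogeneous `v` of degree `g`
to `single g (Uι v)`. -/
noncomputable def iMA : V →ₗ[K] MonoidAlgebra (Uenv L c) G :=
  (DirectSum.toModule K G _ fun g => msingle L c g ∘ₗ (Uι L c ∘ₗ (L.grading g).subtype)) ∘ₗ
    (Vdecomp L).toLinearMap

lemma iMA_homog {g : G} {a : V} (ha : a ∈ L.grading g) :
    iMA L c a = MonoidAlgebra.single g (Uι L c a) := by
  simp only [iMA, LinearMap.coe_comp, Function.comp_apply, LinearEquiv.coe_coe,
    Vdecomp_homog L ha, DirectSum.toModule_lof, msingle_apply, Submodule.coe_subtype]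
lemma single_smul (g : G) (k : K) (u : Uenv L c) :
    MonoidAlgebra.single g (k • u) = k • MonoidAlgebra.single g u :=
  ((msingle L c g).map_smul k u)

lemma single_omega {g h : G} {a b : V} (ha : a ∈ L.grading g) (hb : b ∈ L.grading h) :
    MonoidAlgebra.single (g * h) (algebraMap K (Uenv L c) (c.ω a b)) =
      algebraMap K (MonoidAlgebra (Uenv L c) G) (c.ω a b) := by
  rw [MonoidAlgebra.coe_algebraMap, Function.comp_apply]
  by_cases hgh : g * h = 1
  · rw [hgh]
  · rw [c.degree_zero g h hgh a ha b hb]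
    simp

lemma PhiT_rel : ∀ ⦃x y⦄, URel L c x y →
    TensorAlgebra.lift K (iMA L c) x = TensorAlgebra.lift K (iMA L c) y := by
  intro x y r
  cases r with
  | @rel g h a b ha hb =>
    simp only [map_mul, map_add, map_smul, TensorAlgebra.lift_ι_apply, AlgHom.commutes,
      iMA_homog L c ha, iMA_homog L c hb, iMA_homog L c (L.bracket_grade g h a ha b hb)]
    rw [MonoidAlgebra.single_mul_single, MonoidAlgebra.single_mul_single,
      Uι_mul_Uι L c ha hb, MonoidAlgebra.single_add, MonoidAlgebra.single_add,
      single_smul, mul_comm h g, single_omega L c ha hb]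

/-- The algebra map `Uenv L c → MonoidAlgebra (Uenv L c) G` recording the grading. -/
noncomputable def Phi : Uenv L c →ₐ[K] MonoidAlgebra (Uenv L c) G :=
  RingQuot.liftAlgHom K ⟨TensorAlgebra.lift K (iMA L c), PhiT_rel L c⟩

lemma Phi_Uι (v : V) : Phi L c (Uι L c v) = iMA L c v :=
  (RingQuot.liftAlgHom_mkAlgHom_apply K _ _ _).trans (TensorAlgebra.lift_ι_apply _ _)

lemma Phi_prod (l : List (G × V)) (hl : ∀ p ∈ l, p.2 ∈ L.grading p.1) :
    Phi L c ((l.map fun p => Uι L c p.2).prod) =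
      MonoidAlgebra.single ((l.map Prod.fst).prod) ((l.map fun p => Uι L c p.2).prod) := by
  induction l with
  | nil => simp [MonoidAlgebra.one_def]
  | cons p l ih =>
    simp only [List.map_cons, List.prod_cons, map_mul,
      Phi_Uι, iMA_homog L c (hl p List.mem_cons_self),
      ih fun q hq => hl q (List.mem_cons_of_mem p hq), MonoidAlgebra.single_mul_single]

lemma Phi_grading {g : G} {u : Uenv L c} (hu : u ∈ Ugrading L c g) :
    Phi L c u = MonoidAlgebra.single g u := by
  induction hu using Submodule.span_induction with
  | mem x hx =>
    obtain ⟨l, hl, hg, rfl⟩ := hx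
    rw [Phi_prod L c l hl, hg]
  | zero => simp
  | add x y hx hy ihx ihy => rw [map_add, ihx, ihy, MonoidAlgebra.single_add]
  | smul k x hx ih => rw [map_smul, ih, single_smul]

/-- Products of at most `m` images of homogeneous elements with degrees multiplying to `g`. -/
noncomputable def Fmg (m : ℕ) (g : G) : Submodule K (Uenv L c) :=
  Submodule.span K {u | ∃ l : List (G × V), (∀ p ∈ l, p.2 ∈ L.grading p.1) ∧ l.length ≤ m ∧
    (l.map Prod.fst).prod = g ∧ u = (l.map fun p => Uι L c p.2).prod}

/-- The corresponding submodule of the monoid algebra. -/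
noncomputable def FM (m : ℕ) : Submodule K (MonoidAlgebra (Uenv L c) G) :=
  Submodule.span K {x | ∃ l : List (G × V), (∀ p ∈ l, p.2 ∈ L.grading p.1) ∧ l.length ≤ m ∧
    x = MonoidAlgebra.single ((l.map Prod.fst).prod) ((l.map fun p => Uι L c p.2).prod)}

lemma FM_mono {m m' : ℕ} (h : m ≤ m') : FM L c m ≤ FM L c m' :=
  Submodule.span_mono fun x ⟨l, h1, h2, h3⟩ => ⟨l, h1, h2.trans h, h3⟩

lemma FM_mul {m n : ℕ} {x y : MonoidAlgebra (Uenv L c) G}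
    (hx : x ∈ FM L c m) (hy : y ∈ FM L c n) : x * y ∈ FM L c (m + n) := by
  induction hx using Submodule.span_induction with
  | mem a ha =>
    induction hy using Submodule.span_induction with
    | mem b hb =>
      obtain ⟨l1, hl1, hm1, rfl⟩ := ha
      obtain ⟨l2, hl2, hm2, rfl⟩ := hb
      rw [MonoidAlgebra.single_mul_single]
      refine Submodule.subset_span ⟨l1 ++ l2, ?_, ?_, ?_⟩
      · intro p hp
        rcases List.mem_append.1 hp with h | h
        · exact hl1 p h
        · exact hl2 p h
      · rw [List.length_append]; exact Nat.add_le_add hm1 hm2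
      · rw [List.map_append, List.prod_append, List.map_append, List.prod_append]
    | zero => rw [mul_zero]; exact zero_mem _
    | add b1 b2 h1 h2 ih1 ih2 => rw [mul_add]; exact add_mem ih1 ih2
    | smul k b h ih => rw [mul_smul_comm]; exact Submodule.smul_mem _ _ ih
  | zero => rw [zero_mul]; exact zero_mem _
  | add a1 a2 h1 h2 ih1 ih2 => rw [add_mul]; exact add_mem ih1 ih2
  | smul k a h ih => rw [smul_mul_assoc]; exact Submodule.smul_mem _ _ ih

lemma Phi_Uι_mem (v : V) : Phi L c (Uι L c v) ∈ FM L c 1 := by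
  rw [Phi_Uι]
  show (DirectSum.toModule K G _ fun g => msingle L c g ∘ₗ (Uι L c ∘ₗ (L.grading g).subtype))
    ((Vdecomp L) v) ∈ FM L c 1
  induction (Vdecomp L) v using DirectSum.induction_on with
  | zero => rw [map_zero]; exact zero_mem _
  | of g y =>
    rw [← DirectSum.lof_eq_of K, DirectSum.toModule_lof]
    refine Submodule.subset_span ⟨[(g, (y : V))], ?_, ?_, ?_⟩
    · intro p hp
      rw [List.mem_singleton] at hp
      rw [hp]
      exact y.2
    · simp
    · simp [msingle_apply]
  | add x y ihx ihy => rw [map_add]; exact add_mem ihx ihy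

lemma Phi_list (l : List V) : Phi L c ((l.map (Uι L c)).prod) ∈ FM L c l.length := by
  induction l with
  | nil =>
    refine Submodule.subset_span ⟨[], fun p hp => absurd hp List.not_mem_nil, le_refl _, ?_⟩
    simp [MonoidAlgebra.one_def]
  | cons v l ih =>
    simp only [List.map_cons, List.prod_cons, map_mul, List.length_cons]
    exact FM_mono L c (by omega) (FM_mul L c (Phi_Uι_mem L c v) ih)

lemma Phi_fil {m : ℕ} {u : Uenv L c} (hu : u ∈ Ufil L c m) : Phi L c u ∈ FM L c m := by
  induction hu using Submodule.span_induction with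
  | mem x hx =>
    obtain ⟨l, hl, rfl⟩ := hx
    exact FM_mono L c hl (Phi_list L c l)
  | zero => rw [map_zero]; exact zero_mem _
  | add x y hx hy ihx ihy => rw [map_add]; exact add_mem ihx ihy
  | smul k x hx ih => rw [map_smul]; exact Submodule.smul_mem _ _ ih

lemma coeff_FM {m : ℕ} {x : MonoidAlgebra (Uenv L c) G} (hx : x ∈ FM L c m) (g : G) :
    x.coeff g ∈ Fmg L c m g := by
  induction hx using Submodule.span_induction with
  | mem y hy =>
    obtain ⟨l, h1, h2, rfl⟩ := hy
    rw [MonoidAlgebra.coeff_single, Finsupp.single_apply]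
    split_ifs with hg
    · exact Submodule.subset_span ⟨l, h1, h2, hg, rfl⟩
    · exact zero_mem _
  | zero => exact zero_mem _
  | add x y hx hy ihx ihy => rw [MonoidAlgebra.coeff_add, Finsupp.add_apply]; exact add_mem ihx ihy
  | smul k x hx ih => rw [MonoidAlgebra.coeff_smul, Finsupp.smul_apply]; exact Submodule.smul_mem _ _ ih

lemma corner {m : ℕ} {g : G} {a : Uenv L c} (ha : a ∈ Ufil L c m ⊓ Ugrading L c g) :
    a ∈ Fmg L c m g := by
  obtain ⟨h1, h2⟩ := ha
  have h3 := coeff_FM L c (Phi_fil L c h1) g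
  rwa [Phi_grading L c h2, MonoidAlgebra.coeff_single, Finsupp.single_eq_same] at h3

lemma Ufil_mono {m m' : ℕ} (h : m ≤ m') : Ufil L c m ≤ Ufil L c m' :=
  Submodule.span_mono fun x ⟨l, h1, h2⟩ => ⟨l, h1.trans h, h2⟩

lemma Uι_mem_Ufil (v : V) : Uι L c v ∈ Ufil L c 1 :=
  Submodule.subset_span ⟨[v], by simp, by simp⟩

lemma prod_mem_Ufil (l : List (G × V)) :
    (l.map fun p => Uι L c p.2).prod ∈ Ufil L c l.length :=
  Submodule.subset_span ⟨l.map Prod.snd, by simp, by rw [List.map_map]; rfl⟩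

lemma Ufil_mul {m n : ℕ} {x y : Uenv L c} (hx : x ∈ Ufil L c m) (hy : y ∈ Ufil L c n) :
    x * y ∈ Ufil L c (m + n) := by
  induction hx using Submodule.span_induction with
  | mem a ha =>
    induction hy using Submodule.span_induction with
    | mem b hb =>
      obtain ⟨l1, hm1, rfl⟩ := ha
      obtain ⟨l2, hm2, rfl⟩ := hb
      rw [← List.prod_append, ← List.map_append]
      exact Submodule.subset_span ⟨l1 ++ l2, by
        rw [List.length_append]; exact Nat.add_le_add hm1 hm2, rfl⟩
    | zero => rw [mul_zero]; exact zero_mem _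
    | add b1 b2 h1 h2 ih1 ih2 => rw [mul_add]; exact add_mem ih1 ih2
    | smul k b h ih => rw [mul_smul_comm]; exact Submodule.smul_mem _ _ ih
  | zero => rw [zero_mul]; exact zero_mem _
  | add a1 a2 h1 h2 ih1 ih2 => rw [add_mul]; exact add_mem ih1 ih2
  | smul k a h ih => rw [smul_mul_assoc]; exact Submodule.smul_mem _ _ ih

lemma commB {h' : G} {w : V} (hw : w ∈ L.grading h') :
    ∀ (l : List (G × V)), (∀ p ∈ l, p.2 ∈ L.grading p.1) →
    (l.map fun p => Uι L c p.2).prod * Uι L c w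
      - χ.ε ((l.map Prod.fst).prod) h' • (Uι L c w * (l.map fun p => Uι L c p.2).prod)
      ∈ Ufil L c l.length := by
  intro l
  induction l with
  | nil =>
    intro _
    simp only [List.map_nil, List.prod_nil, List.length_nil, eps_one_left χ h', one_mul,
      mul_one, one_smul, sub_self]
    exact zero_mem _
  | cons p l ih =>
    intro hl
    have hp : p.2 ∈ L.grading p.1 := hl p List.mem_cons_self
    have hIH := ih fun q hq => hl q (List.mem_cons_of_mem p hq)
    set A := Uι L c p.2 with hA
    set W := Uι L c w with hW
    set P := (l.map fun q => Uι L c q.2).prod with hP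
    set e' := χ.ε ((l.map Prod.fst).prod) h' with he'
    set e0 := χ.ε p.1 h' with he0
    set r := P * W - e' • (W * P) with hr
    have h1 : P * W = e' • (W * P) + r := by rw [hr]; abel
    have h2 : A * W = e0 • (W * A) + Uι L c (L.bracket p.2 w)
        + algebraMap K (Uenv L c) (c.ω p.2 w) := Uι_mul_Uι L c hp hw
    simp only [List.map_cons, List.prod_cons, List.length_cons]
    rw [χ.mul_left p.1 ((l.map Prod.fst).prod) h', ← he', ← he0]
    have key : (A * P) * W - (e0 * e') • (W * (A * P))
        = e' • (Uι L c (L.bracket p.2 w) * P) + (e' * c.ω p.2 w) • P + A * r := by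
      have expand : (A * P) * W = e' • (A * (W * P)) + A * r := by
        rw [mul_assoc, h1, mul_add, mul_smul_comm]
      rw [expand, ← mul_assoc A W P, h2, add_mul, add_mul, smul_mul_assoc,
        ← Algebra.smul_def, mul_assoc W A P]
      module
    rw [key]
    refine add_mem (add_mem ?_ ?_) ?_
    · refine Submodule.smul_mem _ _ (Ufil_mono L c (by omega)
        (Ufil_mul L c (Uι_mem_Ufil L c _) (prod_mem_Ufil L c l)))
    · exact Submodule.smul_mem _ _ (Ufil_mono L c (by omega) (prod_mem_Ufil L c l))
    · have := Ufil_mul L c (Uι_mem_Ufil L c p.2) hIH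
      rwa [Nat.add_comm] at this

lemma commC :
    ∀ (l2 : List (G × V)), (∀ p ∈ l2, p.2 ∈ L.grading p.1) →
    ∀ (l1 : List (G × V)), (∀ p ∈ l1, p.2 ∈ L.grading p.1) →
    (l1.map fun p => Uι L c p.2).prod * (l2.map fun p => Uι L c p.2).prod
      - χ.ε ((l1.map Prod.fst).prod) ((l2.map Prod.fst).prod) •
        ((l2.map fun p => Uι L c p.2).prod * (l1.map fun p => Uι L c p.2).prod)
      ∈ Ulow L c (l1.length + l2.length) := by
  intro l2
  induction l2 with
  | nil =>
    intro _ l1 _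
    simp only [List.map_nil, List.prod_nil, List.length_nil,
      eps_one_right χ ((l1.map Prod.fst).prod), one_mul, mul_one, one_smul, sub_self]
    exact zero_mem _
  | cons q l2 ih =>
    intro hl2 l1 hl1
    have hq : q.2 ∈ L.grading q.1 := hl2 q List.mem_cons_self
    have hIH := ih (fun p hp => hl2 p (List.mem_cons_of_mem q hp)) l1 hl1
    set B := Uι L c q.2 with hB
    set Q := (l2.map fun p => Uι L c p.2).prod with hQ
    set P := (l1.map fun p => Uι L c p.2).prod with hPd
    set d1 := (l1.map Prod.fst).prod with hd1
    set d2 := (l2.map Prod.fst).prod with hd2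
    set r := P * B - χ.ε d1 q.1 • (B * P) with hr
    have hrmem : r ∈ Ufil L c l1.length := commB L c hq l1 hl1
    set s := P * Q - χ.ε d1 d2 • (Q * P) with hs
    have hsmem : s ∈ Ulow L c (l1.length + l2.length) := hIH
    simp only [List.map_cons, List.prod_cons, List.length_cons]
    rw [← hB, ← hQ, χ.mul_right d1 q.1 d2]
    have hPB : P * B = χ.ε d1 q.1 • (B * P) + r := by rw [hr]; abel
    have hPQ : P * Q = χ.ε d1 d2 • (Q * P) + s := by rw [hs]; abel
    have key : P * (B * Q) - (χ.ε d1 q.1 * χ.ε d1 d2) • ((B * Q) * P)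
        = χ.ε d1 q.1 • (B * s) + r * Q := by
      rw [← mul_assoc P B Q, hPB, add_mul, smul_mul_assoc, mul_assoc B P Q, hPQ,
        mul_add, mul_smul_comm, ← mul_assoc B Q P]
      module
    rw [key]
    refine add_mem (Submodule.smul_mem _ _ ?_) ?_
    · -- B * s ∈ Ulow (l1.length + (l2.length + 1))
      show B * s ∈ Ufil L c (l1.length + l2.length)
      cases hn : l1.length + l2.length with
      | zero =>
        rw [hn] at hsmem
        have h0 : s = 0 := by simpa [Ulow] using hsmem
        rw [h0, mul_zero]
        exact zero_mem _
      | succ k =>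
        rw [hn] at hsmem
        have hk : s ∈ Ufil L c k := by simpa [Ulow] using hsmem
        have := Ufil_mul L c (Uι_mem_Ufil L c q.2) hk
        rwa [Nat.add_comm] at this
    · -- r * Q ∈ Ulow (l1.length + (l2.length + 1)) = Ufil (l1.length + l2.length)
      show r * Q ∈ Ufil L c (l1.length + l2.length)
      exact Ufil_mul L c hrmem (prod_mem_Ufil L c l2)

lemma Ulow_mono {m m' : ℕ} (h : m ≤ m') : Ulow L c m ≤ Ulow L c m' := by
  cases m with
  | zero => exact bot_le
  | succ k =>
    cases m' with
    | zero => omega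
    | succ k' => exact Ufil_mono L c (by omega)

end AGECAux


/-- the associated graded algebra of `U_ω(L)` is `ε`-commutative: for
homogeneous `a` of filtration degree `m` and `G`-degree `g`, and `b` of filtration degree
`n` and `G`-degree `h`, the element `a*b - ε(g,h) • (b*a)` lies in filtration degree
`m + n - 1`, i.e. the classes in the associated graded algebra satisfy `ab = ε(g,h) ba`. -/
theorem associated_graded_eps_commutative [CharZero K]
    (L : ColorLieAlgebra χ V) (c : ColorCocycle L) :
    ∀ (m n : ℕ) (g h : G), ∀ a ∈ Ufil L c m ⊓ Ugrading L c g,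
      ∀ b ∈ Ufil L c n ⊓ Ugrading L c h,
      a * b - χ.ε g h • (b * a) ∈ Ulow L c (m + n) := by
  intro m n g h a ha b hb
  have ha' : a ∈ AGECAux.Fmg L c m g := AGECAux.corner L c ha
  have hb' : b ∈ AGECAux.Fmg L c n h := AGECAux.corner L c hb
  clear ha hb
  induction ha' using Submodule.span_induction with
  | mem x hx =>
    induction hb' using Submodule.span_induction with
    | mem y hy =>
      obtain ⟨l1, h1, hm1, hg1, rfl⟩ := hx
      obtain ⟨l2, h2, hm2, hg2, rfl⟩ := hy
      rw [← hg1, ← hg2]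
      exact AGECAux.Ulow_mono L c (Nat.add_le_add hm1 hm2) (AGECAux.commC L c l2 h2 l1 h1)
    | zero => simp
    | add y1 y2 hy1 hy2 ih1 ih2 =>
      have e : x * (y1 + y2) - χ.ε g h • ((y1 + y2) * x)
          = (x * y1 - χ.ε g h • (y1 * x)) + (x * y2 - χ.ε g h • (y2 * x)) := by
        rw [mul_add, add_mul, smul_add]; abel
      rw [e]; exact add_mem ih1 ih2
    | smul k y hy ihy =>
      have e : x * (k • y) - χ.ε g h • ((k • y) * x)
          = k • (x * y - χ.ε g h • (y * x)) := by
        rw [mul_smul_comm, smul_mul_assoc, smul_sub, smul_comm (χ.ε g h) k]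
      rw [e]; exact Submodule.smul_mem _ _ ihy
  | zero => simp
  | add x1 x2 hx1 hx2 ih1 ih2 =>
    have e : (x1 + x2) * b - χ.ε g h • (b * (x1 + x2))
        = (x1 * b - χ.ε g h • (b * x1)) + (x2 * b - χ.ε g h • (b * x2)) := by
      rw [add_mul, mul_add, smul_add]; abel
    rw [e]; exact add_mem ih1 ih2
  | smul k x hx ihx =>
    have e : (k • x) * b - χ.ε g h • (b * (k • x))
        = k • (x * b - χ.ε g h • (b * x)) := by
      rw [smul_mul_assoc, mul_smul_comm, smul_sub, smul_comm (χ.ε g h) k]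
    rw [e]; exact Submodule.smul_mem _ _ ihx
end
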